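/- arXiv:1608.06691 — 4 statements merged into one kernel-verified Lean document; each statement's English description precedes it below -/
import Mathlib

section
/- Let Σ be an n×n signature matrix with finite value val(Σ) and a valid offset pair (c;d). Fix a row index l. If one replaces every entry σ_{lj} of row l by a new entry σ̄_{lj} satisfying σ̄_{lj} < d_j - c_l for all j, then the value of the resulting signature matrix Σ̄ satisfies val(Σ̄) < val(Σ). -/
/-- Transversal value of a signature matrix (entries in `ℤ ∪ {-∞}` = `WithBot ℤ`). -/
def tval {n : ℕ} (A : Matrix (Fin n) (Fin n) (WithBot ℤ)) (p : Equiv.Perm (Fin n)) : WithBot ℤ :=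
  ∑ i, A i (p i)

/-- The value `val(Σ)`: the maximum transversal sum. -/
noncomputable def sigVal {n : ℕ} (A : Matrix (Fin n) (Fin n) (WithBot ℤ)) : WithBot ℤ :=
  Finset.univ.sup fun p : Equiv.Perm (Fin n) => tval A p

lemma coe_sum_wb {n : ℕ} (f : Fin n → ℤ) (s : Finset (Fin n)) :
    ((∑ i ∈ s, f i : ℤ) : WithBot ℤ) = ∑ i ∈ s, ((f i : ℤ) : WithBot ℤ) := by
  push_cast; rfl

lemma perm_sum {n : ℕ} (c d : Fin n → ℤ) (p : Equiv.Perm (Fin n)) :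
    (∑ i, (d (p i) - c i)) = (∑ i, d i) - ∑ i, c i := by
  rw [Finset.sum_sub_distrib, Equiv.sum_comp p d]

/-- If row `l` of a signature matrix `A` with finite value and valid offset
pair `(c; d)` is replaced by entries strictly below `d j - c l`, the value of
the resulting signature matrix `B` strictly decreases. -/
theorem stmt1 {n : ℕ} (A B : Matrix (Fin n) (Fin n) (WithBot ℤ))
    (c d : Fin n → ℤ) (hc : ∀ i, 0 ≤ c i)
    (hle : ∀ i j, A i j ≤ ((d j - c i : ℤ) : WithBot ℤ))
    (T : Equiv.Perm (Fin n))
    (hT : ∀ i, A i (T i) = ((d (T i) - c i : ℤ) : WithBot ℤ))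
    (hfin : sigVal A ≠ ⊥)
    (l : Fin n)
    (hB : ∀ i, i ≠ l → B i = A i)
    (hBl : ∀ j, B l j < ((d j - c l : ℤ) : WithBot ℤ)) :
    sigVal B < sigVal A := by
  set S : ℤ := (∑ i, d i) - ∑ i, c i with hS
  -- sigVal A = S
  have hAval : sigVal A = (S : WithBot ℤ) := by
    apply le_antisymm
    · apply Finset.sup_le
      intro p _
      calc tval A p ≤ ∑ i, ((d (p i) - c i : ℤ) : WithBot ℤ) :=
            Finset.sum_le_sum fun i _ => hle i (p i)
        _ = ((∑ i, (d (p i) - c i) : ℤ) : WithBot ℤ) := (coe_sum_wb _ _).symm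
        _ = (S : WithBot ℤ) := by rw [perm_sum]
    · have : tval A T = (S : WithBot ℤ) := by
        unfold tval
        simp_rw [hT]
        rw [← coe_sum_wb, perm_sum]
      rw [← this]
      exact Finset.le_sup (Finset.mem_univ T)
  rw [hAval]
  -- each transversal of B is < S
  apply Finset.sup_lt_iff (by exact bot_lt_iff_ne_bot.2 (by simp)) |>.2
  intro p _
  have hsplit : tval B p = B l (p l) + ∑ i ∈ Finset.univ.erase l, B i (p i) := by
    unfold tval
    exact (Finset.add_sum_erase Finset.univ (fun i => B i (p i)) (Finset.mem_univ l)).symm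
  have hrest : ∑ i ∈ Finset.univ.erase l, B i (p i)
      ≤ ((∑ i ∈ Finset.univ.erase l, (d (p i) - c i) : ℤ) : WithBot ℤ) := by
    rw [coe_sum_wb]
    refine Finset.sum_le_sum fun i hi => ?_
    rw [hB i (Finset.ne_of_mem_erase hi)]
    exact hle i (p i)
  have hsum : (d (p l) - c l) + ∑ i ∈ Finset.univ.erase l, (d (p i) - c i) = S := by
    rw [Finset.add_sum_erase Finset.univ (fun i => d (p i) - c i) (Finset.mem_univ l), perm_sum]
  calc tval B p = B l (p l) + ∑ i ∈ Finset.univ.erase l, B i (p i) := hsplit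
    _ ≤ B l (p l) + ((∑ i ∈ Finset.univ.erase l, (d (p i) - c i) : ℤ) : WithBot ℤ) :=
        add_le_add_right hrest _
    _ < ((d (p l) - c l : ℤ) : WithBot ℤ) + ((∑ i ∈ Finset.univ.erase l, (d (p i) - c i) : ℤ) : WithBot ℤ) :=
        WithBot.add_lt_add_right (by exact WithBot.coe_ne_bot) (hBl (p l))
    _ = (S : WithBot ℤ) := by rw [← WithBot.coe_add, hsum]
end

section
/- (Griewank's Lemma) Let w be a smooth function of t, of variables x_1(t),…,x_n(t), and of finitely many of their derivatives x_j^{(k)}. Suppose w does not depend on any derivative x_j^{(k)} with k > q (i.e., ∂w/∂x_j^{(k)} ≡ 0 for k > q). Then for every p ≥ 0, the p-th total time derivative w^{(p)} satisfies ∂w^{(p)}/∂x_j^{(q+p)} = ∂w/∂x_j^{(q)}, where derivatives x_j^{(k)} are treated as independent formal variables and d/dt acts by the chain rule sending x_j^{(k)} to x_j^{(k+1)}. -/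
open MvPolynomial

/-- Differential polynomials in the formal variables `t` (= `none`) and
`x_j^{(k)}` (= `some (j, k)`), with real coefficients. -/
abbrev DPoly (n : ℕ) := MvPolynomial (Option (Fin n × ℕ)) ℝ

/-- The formal variable `x_j^{(k)}`. -/
noncomputable def Xv {n : ℕ} (j : Fin n) (k : ℕ) : DPoly n := X (some (j, k))

/-- The total time derivative operator `D`, acting by the chain rule:
`D w = ∂w/∂t + ∑_{j,k} (∂w/∂x_j^{(k)}) · x_j^{(k+1)}`. -/
noncomputable def Dop {n : ℕ} : DPoly n → DPoly n :=
  MvPolynomial.mkDerivation ℝ fun v : Option (Fin n × ℕ) =>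
    match v with
    | none => (1 : DPoly n)
    | some (j, k) => Xv j (k + 1)

/-- `Dop` bundled as a derivation. -/
noncomputable def DopD {n : ℕ} : Derivation ℝ (DPoly n) (DPoly n) :=
  MvPolynomial.mkDerivation ℝ fun v : Option (Fin n × ℕ) =>
    match v with
    | none => (1 : DPoly n)
    | some (j, k) => Xv j (k + 1)

lemma Dop_eq {n : ℕ} : (Dop : DPoly n → DPoly n) = ⇑DopD := rfl

/-- The commutator `[∂/∂x_j^{(k+1)}, D] = ∂/∂x_j^{(k)}`. -/
lemma bracket_eq {n : ℕ} (j : Fin n) (k : ℕ) :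
    ⁅(pderiv (some (j, k+1)) : Derivation ℝ (DPoly n) (DPoly n)), DopD⁆
      = pderiv (some (j, k)) := by
  apply MvPolynomial.derivation_ext
  intro i
  rw [Derivation.commutator_apply]
  match i with
  | none =>
      rw [show (DopD (X none) : DPoly n) = 1 from mkDerivation_X _ _ _,
        Derivation.map_one_eq_zero, pderiv_X_of_ne (by simp),
        pderiv_X_of_ne (by simp)]
      simp
  | some (i, m) =>
      have hB : DopD ((pderiv (some (j, k+1)) : Derivation ℝ (DPoly n) (DPoly n))
          (X (some (i, m)))) = 0 := by
        by_cases h : (some (i, m) : Option (Fin n × ℕ)) = some (j, k+1)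
        · rw [h, pderiv_X_self, Derivation.map_one_eq_zero]
        · rw [pderiv_X_of_ne h, map_zero]
      rw [hB, sub_zero, show (DopD (X (some (i, m))) : DPoly n) = X (some (i, m+1))
        from mkDerivation_X _ _ _]
      by_cases h : (i, m) = (j, k)
      · obtain ⟨h1, h2⟩ := Prod.mk.injEq .. ▸ h
        subst h1; subst h2
        rw [pderiv_X_self, pderiv_X_self]
      · have h1 : (some (i, m+1) : Option (Fin n × ℕ)) ≠ some (j, k+1) := by
          simp only [ne_eq, Option.some.injEq, Prod.mk.injEq, not_and]
          intro hij hm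
          exact h (by simp [hij, Nat.succ_injective hm])
        have h3 : (some (i, m) : Option (Fin n × ℕ)) ≠ some (j, k) := by simp [h]
        rw [pderiv_X_of_ne h1, pderiv_X_of_ne h3]

lemma comm_pderiv_Dop {n : ℕ} (j : Fin n) (k : ℕ) (w : DPoly n) :
    pderiv (some (j, k+1)) (Dop w)
      = Dop (pderiv (some (j, k+1)) w) + pderiv (some (j, k)) w := by
  have := congrArg (fun D : Derivation ℝ (DPoly n) (DPoly n) => D w) (bracket_eq j k)
  simp only [Derivation.commutator_apply] at this
  rw [Dop_eq]
  linear_combination this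

/-- **Griewank's Lemma.** If `w` does not depend on any derivative `x_j^{(k)}`
with `k > q`, then for every `p ≥ 0`,
`∂(D^p w)/∂x_j^{(q+p)} = ∂w/∂x_j^{(q)}`. -/
theorem stmt3 {n : ℕ} (w : DPoly n) (j : Fin n) (q : ℕ)
    (hq : ∀ k, q < k → pderiv (some (j, k)) w = 0) :
    ∀ p : ℕ, pderiv (some (j, q + p)) (Dop^[p] w) = pderiv (some (j, q)) w := by
  have hD0 : (Dop : DPoly n → DPoly n) 0 = 0 := by rw [Dop_eq]; exact map_zero _
  have key : ∀ p : ℕ, (∀ k, q + p < k → pderiv (some (j, k)) (Dop^[p] w) = 0) ∧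
      pderiv (some (j, q + p)) (Dop^[p] w) = pderiv (some (j, q)) w := by
    intro p
    induction p with
    | zero => exact ⟨by simpa using hq, by simp⟩
    | succ p ih =>
      obtain ⟨ih0, ih1⟩ := ih
      have hiter : Dop^[p+1] w = Dop (Dop^[p] w) :=
        Function.iterate_succ_apply' Dop p w
      constructor
      · intro k hk
        obtain ⟨m, rfl⟩ : ∃ m, k = m + 1 := ⟨k - 1, by omega⟩
        rw [hiter, comm_pderiv_Dop, ih0 (m+1) (by omega), ih0 m (by omega), hD0]
        simp
      · rw [hiter, show q + (p+1) = (q+p) + 1 by ring, comm_pderiv_Dop,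
          ih0 (q+p+1) (by omega), ih1, hD0, zero_add]
  exact fun p => (key p).2
end

section
/- In the LC conversion, if u_l is never zero on the interval of interest, then the original equation can be recovered as f_l = (f̄_l - Σ_{i∈I, i≠l} u_i f_i^{(c_i-θ)}) / u_l; hence any solution of the converted system (f_1,…,f̄_l,…,f_n) = 0 with u_l ≠ 0 is a solution of the original system (f_1,…,f_l,…,f_n) = 0, and conversely. -/
open MvPolynomial

/-- `hod w j`: the highest order of a derivative of `x_j` occurring in `w`
(`⊥` = `-∞` if `x_j` does not occur). This is the signature entry `σ_{ij}`
when `w = f i`. -/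
noncomputable def hod {n : ℕ} (w : DPoly n) (j : Fin n) : WithBot ℤ :=
  w.vars.sup fun v =>
    match v with
    | some (j', k) => if j' = j then ((k : ℤ) : WithBot ℤ) else ⊥
    | none => ⊥

/-- The System Jacobian: `J i j = ∂f_i/∂x_j^{(d_j - c_i)}` (which is `0`
when `d j - c i > σ_{ij}`), and `0` when `d j - c i < 0`. -/
noncomputable def sysJac {n : ℕ} (f : Fin n → DPoly n) (c d : Fin n → ℕ) :
    Matrix (Fin n) (Fin n) (DPoly n) :=
  fun i j => if c i ≤ d j then pderiv (some (j, d j - c i)) (f i) else 0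

/-- `φ` is a (formal, Taylor-coefficient) solution point of the system `g = 0`:
all total derivatives of all equations vanish when evaluated at `φ`. -/
def IsSolPt {n m : ℕ} (φ : Option (Fin n × ℕ) → ℝ) (g : Fin m → DPoly n) : Prop :=
  ∀ i, ∀ p : ℕ, MvPolynomial.eval φ (Dop^[p] (g i)) = 0

lemma Dop_add {n : ℕ} (a b : DPoly n) : Dop (a + b) = Dop a + Dop b := by
  unfold Dop; exact map_add _ a b

lemma Dop_mul {n : ℕ} (a b : DPoly n) : Dop (a * b) = a * Dop b + b * Dop a := by
  unfold Dop; exact Derivation.leibniz _ a b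

lemma Dop_iter_add {n : ℕ} (p : ℕ) (a b : DPoly n) :
    Dop^[p] (a + b) = Dop^[p] a + Dop^[p] b := by
  induction p generalizing a b with
  | zero => simp
  | succ p ih => simp [Function.iterate_succ_apply, Dop_add, ih]

lemma Dop_iter_sum {n : ℕ} (p : ℕ) {ι : Type*} (s : Finset ι) (g : ι → DPoly n) :
    Dop^[p] (∑ i ∈ s, g i) = ∑ i ∈ s, Dop^[p] (g i) := by
  classical
  induction s using Finset.induction_on with
  | empty =>
    simp only [Finset.sum_empty]
    induction p with
    | zero => simp
    | succ p ih => rw [Function.iterate_succ_apply]; unfold Dop; rw [map_zero]; exact ih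
  | insert _ _ hx ih => rw [Finset.sum_insert hx, Dop_iter_add, ih, Finset.sum_insert hx]

/-- Key lemma: if the first `p` derivatives of `b` vanish at `φ`, then
`eval φ (D^[p] (a*b)) = eval φ a * eval φ (D^[p] b)`. -/
lemma keyC {n : ℕ} (φ : Option (Fin n × ℕ) → ℝ) (p : ℕ) :
    ∀ a b : DPoly n, (∀ q < p, MvPolynomial.eval φ (Dop^[q] b) = 0) →
    MvPolynomial.eval φ (Dop^[p] (a * b)) =
      MvPolynomial.eval φ a * MvPolynomial.eval φ (Dop^[p] b) := by
  induction p with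
  | zero => intro a b _; simp
  | succ p ih =>
    intro a b hb
    have h1 : Dop^[p + 1] (a * b) = Dop^[p] (a * Dop b) + Dop^[p] (Dop a * b) := by
      rw [Function.iterate_succ_apply, Dop_mul, Dop_iter_add, mul_comm b]
    rw [h1, map_add]
    rw [ih a (Dop b) (fun q hq => by
      rw [← Function.iterate_succ_apply]; exact hb (q + 1) (by omega))]
    rw [ih (Dop a) b (fun q hq => hb q (by omega))]
    rw [hb p (by omega), ← Function.iterate_succ_apply]
    ring

lemma lemA {n : ℕ} (φ : Option (Fin n × ℕ) → ℝ) (a b : DPoly n)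
    (hb : ∀ q : ℕ, MvPolynomial.eval φ (Dop^[q] b) = 0) (p : ℕ) :
    MvPolynomial.eval φ (Dop^[p] (a * b)) = 0 := by
  rw [keyC φ p a b (fun q _ => hb q), hb p, mul_zero]

lemma lemB {n : ℕ} (φ : Option (Fin n × ℕ) → ℝ) (a b : DPoly n)
    (ha : MvPolynomial.eval φ a ≠ 0)
    (h : ∀ p : ℕ, MvPolynomial.eval φ (Dop^[p] (a * b)) = 0) (p : ℕ) :
    MvPolynomial.eval φ (Dop^[p] b) = 0 := by
  induction p using Nat.strong_induction_on with
  | _ p ih =>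
    have := keyC φ p a b (fun q hq => ih q hq)
    rw [h p] at this
    exact (mul_eq_zero.mp this.symm).resolve_left ha

/-- **Recovery/equivalence for the LC conversion.** With `l ∈ I`, `c l = θ`,
the replaced equation satisfies
`u l * f l = f̄ - ∑_{i ≠ l} u i · f i^{(c i - θ)}`; consequently, at any point
`φ` where `u l` does not vanish, `φ` is a (formal) solution of the converted
system iff it is a (formal) solution of the original system. -/
theorem stmt7 {n : ℕ} (f u : Fin n → DPoly n) (c : Fin n → ℕ)
    (θ : ℕ)
    (hθ1 : ∀ i, u i ≠ 0 → θ ≤ c i)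
    (hθ2 : ∃ i, u i ≠ 0 ∧ c i = θ)
    (l : Fin n) (hul : u l ≠ 0) (hcl : c l = θ)
    (φ : Option (Fin n × ℕ) → ℝ)
    (hφ : MvPolynomial.eval φ (u l) ≠ 0) :
    u l * f l = (∑ i, u i * Dop^[c i - θ] (f i))
        - ∑ i ∈ Finset.univ.erase l, u i * Dop^[c i - θ] (f i) ∧
    (IsSolPt φ (Function.update f l (∑ i, u i * Dop^[c i - θ] (f i))) ↔
      IsSolPt φ f) := by
  classical
  have hcl0 : c l - θ = 0 := by omega
  have hsplit : (∑ i, u i * Dop^[c i - θ] (f i)) =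
      u l * f l + ∑ i ∈ Finset.univ.erase l, u i * Dop^[c i - θ] (f i) := by
    rw [← Finset.add_sum_erase _ _ (Finset.mem_univ l), hcl0]
    simp
  constructor
  · rw [hsplit]; ring
  · constructor
    · intro H i p
      by_cases hi : i = l
      · subst hi
        -- all derivatives of the erased sum vanish
        have hS : ∀ p : ℕ, MvPolynomial.eval φ
            (Dop^[p] (∑ j ∈ Finset.univ.erase i, u j * Dop^[c j - θ] (f j))) = 0 := by
          intro p
          rw [Dop_iter_sum, map_sum]
          refine Finset.sum_eq_zero fun j hj => ?_
          have hji : j ≠ i := Finset.ne_of_mem_erase hj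
          refine lemA φ _ _ (fun q => ?_) p
          rw [← Function.iterate_add_apply]
          have := H j (q + (c j - θ))
          rwa [Function.update_of_ne hji] at this
        have hg : ∀ p : ℕ, MvPolynomial.eval φ
            (Dop^[p] (∑ j, u j * Dop^[c j - θ] (f j))) = 0 := by
          intro p
          have := H i p
          rwa [Function.update_self] at this
        have hul' : ∀ p : ℕ, MvPolynomial.eval φ (Dop^[p] (u i * f i)) = 0 := by
          intro p
          have h1 := hg p
          rw [hsplit, Dop_iter_add, map_add, hS p, add_zero] at h1
          exact h1
        exact lemB φ (u i) (f i) hφ hul' p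
      · have := H i p
        rwa [Function.update_of_ne hi] at this
    · intro H i p
      by_cases hi : i = l
      · subst hi
        rw [Function.update_self, Dop_iter_sum, map_sum]
        refine Finset.sum_eq_zero fun j _ => ?_
        refine lemA φ _ _ (fun q => ?_) p
        rw [← Function.iterate_add_apply]
        exact H j (q + (c j - θ))
      · rw [Function.update_of_ne hi]; exact H i p
end

section
/- If the formal signature matrix Σ̃ (computed without symbolic cancellation) of a DAE satisfies val(Σ̃) > val(Σ), where Σ is the true signature matrix, then for any valid offset pair (c̃;d̃) of Σ̃ the formal System Jacobian J̃ defined by J̃_{ij} = ∂f_i/∂x_j^{(d̃_j - c̃_i)} if d̃_j - c̃_i = σ̃_{ij} and 0 otherwise, is structurally singular: every transversal of J̃ contains an identically zero entry. -/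
/-- If the formal signature matrix `St` (entrywise ≥ the true signature matrix
`S`) has `val(St) > val(S)`, then for any valid offset pair `(ct; dt)` of `St`
the formal System Jacobian `Jt` (whose `(i,j)` entry vanishes identically when
`S i j < St i j`, by lack of true dependence, and also when `St i j < dt j - ct i`,
by definition) is structurally singular: every transversal contains a zero entry.
Entries of `Jt` live in a commutative ring `R` of "functions". -/
theorem stmt17 {n : ℕ} {R : Type*} [CommRing R]
    (S St : Matrix (Fin n) (Fin n) (WithBot ℤ))
    (hge : ∀ i j, S i j ≤ St i j)
    (ct dt : Fin n → ℤ) (hc : ∀ i, 0 ≤ ct i)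
    (hle : ∀ i j, St i j ≤ ((dt j - ct i : ℤ) : WithBot ℤ))
    (T : Equiv.Perm (Fin n))
    (hT : ∀ i, St i (T i) = ((dt (T i) - ct i : ℤ) : WithBot ℤ))
    (Jt : Matrix (Fin n) (Fin n) R)
    (hJ1 : ∀ i j, S i j < St i j → Jt i j = 0)
    (hJ2 : ∀ i j, St i j < ((dt j - ct i : ℤ) : WithBot ℤ) → Jt i j = 0)
    (hval : sigVal S < sigVal St) :
    ∀ p : Equiv.Perm (Fin n), ∃ i, Jt i (p i) = 0 := by
  intro p
  by_contra h
  push_neg at h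
  -- For each i, St i (p i) = dt (p i) - ct i and S i (p i) = St i (p i)
  have hSt : ∀ i, St i (p i) = ((dt (p i) - ct i : ℤ) : WithBot ℤ) := by
    intro i
    rcases lt_or_eq_of_le (hle i (p i)) with hlt | heq
    · exact absurd (hJ2 i (p i) hlt) (h i)
    · exact heq
  have hS : ∀ i, S i (p i) = St i (p i) := by
    intro i
    rcases lt_or_eq_of_le (hge i (p i)) with hlt | heq
    · exact absurd (hJ1 i (p i) hlt) (h i)
    · exact heq
  -- the common value of such full transversals
  have key : ∀ q : Equiv.Perm (Fin n),
      (∑ i, ((dt (q i) - ct i : ℤ) : WithBot ℤ)) =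
      ((∑ i, dt i - ∑ i, ct i : ℤ) : WithBot ℤ) := by
    intro q
    have : (∑ i, ((dt (q i) - ct i : ℤ) : WithBot ℤ)) =
        ((∑ i, (dt (q i) - ct i) : ℤ) : WithBot ℤ) := by
      induction (Finset.univ : Finset (Fin n)) using Finset.induction with
      | empty => simp
      | insert _ _ hx ih => simp_all [Finset.sum_insert hx]
    rw [this, Finset.sum_sub_distrib]
    congr 1
    rw [Equiv.sum_comp q dt]
  have hSp : tval S p = ((∑ i, dt i - ∑ i, ct i : ℤ) : WithBot ℤ) := by
    unfold tval
    rw [show (∑ i, S i (p i)) = ∑ i, ((dt (p i) - ct i : ℤ) : WithBot ℤ) from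
      Finset.sum_congr rfl fun i _ => (hS i).trans (hSt i), key p]
  have hTmax : sigVal St ≤ ((∑ i, dt i - ∑ i, ct i : ℤ) : WithBot ℤ) := by
    apply Finset.sup_le
    intro q _
    calc tval St q ≤ ∑ i, ((dt (q i) - ct i : ℤ) : WithBot ℤ) :=
          Finset.sum_le_sum fun i _ => hle i (q i)
      _ = _ := key q
  have hSle : ((∑ i, dt i - ∑ i, ct i : ℤ) : WithBot ℤ) ≤ sigVal S := by
    rw [← hSp]
    exact Finset.le_sup (f := fun q : Equiv.Perm (Fin n) => tval S q) (Finset.mem_univ p)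
  exact absurd hval (not_lt.mpr (hTmax.trans hSle))
end
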